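/- arXiv:2511.15973 — 2 statements merged into one kernel-verified Lean document; each statement's English description precedes it below -/
import Mathlib

section
/- Define a(r) = 2r / ((r/√2)(1−t) − g_t(r) + 1) where g_t(r) = e^{-r/√2}(t·sin(r/√2) + cos(r/√2)) and t < 1 is a fixed real parameter. Then lim_{r→0⁺} a(r) = √2/(1−t) and lim_{r→∞} a(r) = 2√2/(1−t). -/
open Real Filter

noncomputable def gt (t r : ℝ) : ℝ :=
  Real.exp (-(r / Real.sqrt 2)) * (t * Real.sin (r / Real.sqrt 2) + Real.cos (r / Real.sqrt 2))

lemma hasDerivAt_gt (t : ℝ) : HasDerivAt (gt t) ((t - 1) / Real.sqrt 2) 0 := by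
  have hx : HasDerivAt (fun r : ℝ => r / Real.sqrt 2) (1 / Real.sqrt 2) 0 := by
    simpa using (hasDerivAt_id (0 : ℝ)).div_const (Real.sqrt 2)
  have he : HasDerivAt (fun r : ℝ => Real.exp (-(r / Real.sqrt 2))) (-(1 / Real.sqrt 2)) 0 := by
    simpa using hx.neg.exp
  have hs : HasDerivAt (fun r : ℝ => Real.sin (r / Real.sqrt 2)) (1 / Real.sqrt 2) 0 := by
    simpa using hx.sin
  have hc : HasDerivAt (fun r : ℝ => Real.cos (r / Real.sqrt 2)) 0 0 := by
    simpa using hx.cos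
  have h := he.mul ((hs.const_mul t).add hc)
  refine h.congr_deriv ?_
  simp
  ring

/-- The two-center scattering length `a(r) = 2r/((r/√2)(1−t) − g_t(r) + 1)` satisfies
`a(r) → √2/(1−t)` as `r → 0⁺` and `a(r) → 2√2/(1−t)` as `r → ∞`. -/
theorem scattering_length_limits (t : ℝ) (ht : t < 1) :
    Tendsto (fun r : ℝ => 2 * r / ((r / Real.sqrt 2) * (1 - t) - gt t r + 1))
      (nhdsWithin 0 (Set.Ioi 0)) (nhds (Real.sqrt 2 / (1 - t))) ∧
    Tendsto (fun r : ℝ => 2 * r / ((r / Real.sqrt 2) * (1 - t) - gt t r + 1))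
      atTop (nhds (2 * Real.sqrt 2 / (1 - t))) := by
  have h1t : (1 : ℝ) - t ≠ 0 := by linarith
  have hs2 : (0 : ℝ) < Real.sqrt 2 := Real.sqrt_pos.mpr (by norm_num)
  have hsq : Real.sqrt 2 * Real.sqrt 2 = 2 := Real.mul_self_sqrt (by norm_num)
  set D : ℝ → ℝ := fun r => (r / Real.sqrt 2) * (1 - t) - gt t r + 1 with hD
  have hD0 : D 0 = 0 := by simp [hD, gt]
  have key : (fun r : ℝ => 2 * r / D r) = fun r => 2 / (D r / r) := by
    funext r; rw [div_div_eq_mul_div]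
  constructor
  · -- limit at 0⁺
    have hderiv : HasDerivAt D (Real.sqrt 2 * (1 - t)) 0 := by
      have h1 := ((hasDerivAt_id (0 : ℝ)).div_const (Real.sqrt 2)).mul_const (1 - t)
      have h3 := (h1.sub (hasDerivAt_gt t)).add_const 1
      refine h3.congr_deriv ?_
      field_simp
      linear_combination (t - 1) * hsq
    have hslope : Tendsto (fun r => D r / r) (nhdsWithin 0 {(0:ℝ)}ᶜ)
        (nhds (Real.sqrt 2 * (1 - t))) := by
      have := hasDerivAt_iff_tendsto_slope.mp hderiv
      simpa [slope_fun_def, hD0, div_eq_inv_mul] using this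
    have hslope' : Tendsto (fun r => D r / r) (nhdsWithin 0 (Set.Ioi 0))
        (nhds (Real.sqrt 2 * (1 - t))) :=
      hslope.mono_left (nhdsWithin_mono 0 (fun x hx => ne_of_gt hx))
    have h := (tendsto_const_nhds (x := (2:ℝ))).div hslope'
      (mul_ne_zero (ne_of_gt hs2) h1t)
    have heq : Real.sqrt 2 / (1 - t) = 2 / (Real.sqrt 2 * (1 - t)) := by
      rw [div_eq_div_iff h1t (mul_ne_zero (ne_of_gt hs2) h1t)]
      linear_combination (1 - t) * hsq
    rw [heq, key]
    exact h
  · -- limit at ∞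
    have hgr : Tendsto (fun r => gt t r / r) atTop (nhds 0) := by
      refine squeeze_zero_norm' (a := fun r => (|t| + 1) / r) ?_
        (tendsto_const_nhds.div_atTop tendsto_id)
      filter_upwards [eventually_gt_atTop (0:ℝ)] with r hr
      rw [norm_div, Real.norm_eq_abs, Real.norm_eq_abs, abs_of_pos hr]
      gcongr
      have hx : (0:ℝ) ≤ r / Real.sqrt 2 := by positivity
      have he1 : Real.exp (-(r / Real.sqrt 2)) ≤ 1 := Real.exp_le_one_iff.mpr (by linarith)
      have htri : |t * Real.sin (r / Real.sqrt 2) + Real.cos (r / Real.sqrt 2)| ≤ |t| + 1 := by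
        refine (abs_add_le _ _).trans ?_
        rw [abs_mul]
        have h1 := Real.abs_sin_le_one (r / Real.sqrt 2)
        have h2 := Real.abs_cos_le_one (r / Real.sqrt 2)
        nlinarith [abs_nonneg t]
      calc |gt t r| = Real.exp (-(r / Real.sqrt 2)) *
            |t * Real.sin (r / Real.sqrt 2) + Real.cos (r / Real.sqrt 2)| := by
            rw [gt, abs_mul, Real.abs_exp]
        _ ≤ 1 * (|t| + 1) := mul_le_mul he1 htri (abs_nonneg _) zero_le_one
        _ = |t| + 1 := one_mul _
    have hinv : Tendsto (fun r : ℝ => 1 / r) atTop (nhds 0) := by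
      simpa using tendsto_inv_atTop_zero (𝕜 := ℝ)
    have hDr : Tendsto (fun r => D r / r) atTop (nhds ((1 - t) / Real.sqrt 2)) := by
      have h0 : Tendsto (fun r : ℝ => (1 - t) / Real.sqrt 2 - gt t r / r + 1 / r) atTop
          (nhds ((1 - t) / Real.sqrt 2 - 0 + 0)) :=
        (tendsto_const_nhds.sub hgr).add hinv
      rw [show (1 - t) / Real.sqrt 2 - 0 + 0 = (1 - t) / Real.sqrt 2 by ring] at h0
      apply h0.congr'
      filter_upwards [eventually_ne_atTop (0:ℝ)] with r hr
      simp only [hD]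
      field_simp
    have h := (tendsto_const_nhds (x := (2:ℝ))).div hDr
      (div_ne_zero h1t (ne_of_gt hs2))
    have heq : 2 * Real.sqrt 2 / (1 - t) = 2 / ((1 - t) / Real.sqrt 2) := by
      rw [div_div_eq_mul_div]
    rw [heq, key]
    exact h
end

section
/- Let λ_t(r) = r^{-2}[W(e^{ω(r)}) − ω(r)]² with ω(r) = −(r/√2)(1−t) + g_t(r), g_t(r) = e^{-r/√2}(t·sin(r/√2) + cos(r/√2)), and t < 1. Then λ_t extends continuously to r = 0 with λ_t(0) = (1−t)²/2, and λ_t(r) = (1−t)²/2 + O(r) as r → 0⁺. -/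
open Real Filter

noncomputable def omega (t r : ℝ) : ℝ := -(r / Real.sqrt 2) * (1 - t) + gt t r

set_option maxHeartbeats 2000000 in
lemma lambdat_key (W : ℝ → ℝ) (hW : ∀ x : ℝ, 0 < x → 0 < W x ∧ W x * Real.exp (W x) = x)
    (t : ℝ) (ht : t < 1) :
    ∃ C > (0:ℝ), ∃ δ > (0:ℝ), ∀ r : ℝ, 0 < r → r < δ →
      |(W (Real.exp (omega t r)) - omega t r) ^ 2 / r ^ 2 - (1 - t) ^ 2 / 2| ≤ C * r := by
  have hs2 : (0:ℝ) < Real.sqrt 2 := by positivity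
  have hs2sq : Real.sqrt 2 ^ 2 = 2 := Real.sq_sqrt (by norm_num)
  have h12 : (1:ℝ) ≤ Real.sqrt 2 := by nlinarith only [hs2.le, hs2sq]
  set a : ℝ := (1 - t) / Real.sqrt 2 with ha
  have ha0 : 0 < a := div_pos (by linarith) hs2
  set K : ℝ := 2 * (1 - t) + (|t| + 2) with hK
  have hK0 : 0 < K := by
    have : (0:ℝ) ≤ |t| := abs_nonneg t
    have h1 : (0:ℝ) < 2 * (1 - t) := by linarith
    linarith
  set C3 : ℝ := (|t| + 2) / 2 + K ^ 2 with hC3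
  have hC30 : 0 < C3 := by positivity
  set δ : ℝ := min 1 (1 / (2 * K)) with hδ
  have hδ0 : 0 < δ := lt_min one_pos (by positivity)
  refine ⟨C3 * (2 * a + C3), by positivity, δ, hδ0, ?_⟩
  intro r hr hrδ
  have hr1 : r ≤ 1 := le_of_lt (lt_of_lt_of_le hrδ (min_le_left _ _))
  have hrK : r ≤ 1 / (2 * K) := le_of_lt (lt_of_lt_of_le hrδ (min_le_right _ _))
  have hr2 : r ^ 2 ≤ r := by
    nlinarith only [hr, hr1, mul_nonneg hr.le (sub_nonneg.mpr hr1)]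
  set y : ℝ := omega t r with hy
  set u : ℝ := r / Real.sqrt 2 with hu
  have hu0 : 0 < u := div_pos hr hs2
  have hu1 : u ≤ 1 := by
    rw [hu, div_le_one hs2]; exact hr1.trans h12
  have hur : u ≤ r := by
    rw [hu]; exact div_le_self hr.le h12
  have hu2 : u ^ 2 = r ^ 2 / 2 := by rw [hu, div_pow, hs2sq]
  have hsin : |Real.sin u - u| ≤ u ^ 3 / 4 := by
    have h1 := Real.sin_lt hu0
    have h2 := Real.sin_gt_sub_cube hu0
    rw [abs_le]; constructor <;>
      linarith only [h1, h2, pow_pos hu0 3]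
  have hcos : |Real.cos u - 1| ≤ u ^ 2 / 2 := by
    have h1 := Real.cos_le_one u
    have h2 := Real.one_sub_sq_div_two_le_cos (x := u)
    rw [abs_le]; constructor <;>
      linarith only [h1, h2, sq_nonneg u]
  have hexp1 : |Real.exp (-u) - 1 + u| ≤ u ^ 2 := by
    have h := Real.abs_exp_sub_one_sub_id_le (x := -u)
      (by rw [abs_neg, abs_of_pos hu0]; exact hu1)
    have e : Real.exp (-u) - 1 - (-u) = Real.exp (-u) - 1 + u := by ring
    rw [e] at h
    calc |Real.exp (-u) - 1 + u| ≤ (-u) ^ 2 := h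
      _ = u ^ 2 := by ring
  have hexppos := Real.exp_pos (-u)
  have hexple : Real.exp (-u) ≤ 1 := by
    exact Real.exp_le_one_iff.mpr (by linarith)
  have hexpge : 1 - u ≤ Real.exp (-u) := by linarith [Real.add_one_le_exp (-u)]
  have hA : |Real.exp (-u) * Real.sin u - u| ≤ 5 / 4 * u ^ 2 := by
    have e1 : Real.exp (-u) * Real.sin u - u
        = Real.exp (-u) * (Real.sin u - u) + (Real.exp (-u) - 1) * u := by ring
    rw [e1]
    have b1 : |Real.exp (-u) * (Real.sin u - u)| ≤ u ^ 3 / 4 := by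
      rw [abs_mul, abs_of_pos hexppos]
      calc Real.exp (-u) * |Real.sin u - u| ≤ 1 * (u ^ 3 / 4) :=
            mul_le_mul hexple hsin (abs_nonneg _) zero_le_one
        _ = u ^ 3 / 4 := one_mul _
    have b2 : |(Real.exp (-u) - 1) * u| ≤ u * u := by
      rw [abs_mul, abs_of_pos hu0]
      have h3 : |Real.exp (-u) - 1| ≤ u := by
        rw [abs_le]; constructor <;> linarith
      exact mul_le_mul_of_nonneg_right h3 hu0.le
    calc |Real.exp (-u) * (Real.sin u - u) + (Real.exp (-u) - 1) * u|
        ≤ |Real.exp (-u) * (Real.sin u - u)| + |(Real.exp (-u) - 1) * u| := abs_add_le _ _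
      _ ≤ 5 / 4 * u ^ 2 := by
          linarith only [b1, b2, pow_le_pow_of_le_one hu0.le hu1 (by norm_num : 2 ≤ 3),
            sq_nonneg u]
  have hBc : |Real.exp (-u) * Real.cos u - 1 + u| ≤ 3 / 2 * u ^ 2 := by
    have e1 : Real.exp (-u) * Real.cos u - 1 + u
        = Real.exp (-u) * (Real.cos u - 1) + (Real.exp (-u) - 1 + u) := by ring
    rw [e1]
    have b1 : |Real.exp (-u) * (Real.cos u - 1)| ≤ u ^ 2 / 2 := by
      rw [abs_mul, abs_of_pos hexppos]
      calc Real.exp (-u) * |Real.cos u - 1| ≤ 1 * (u ^ 2 / 2) :=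
            mul_le_mul hexple hcos (abs_nonneg _) zero_le_one
        _ = u ^ 2 / 2 := one_mul _
    calc |Real.exp (-u) * (Real.cos u - 1) + (Real.exp (-u) - 1 + u)|
        ≤ |Real.exp (-u) * (Real.cos u - 1)| + |Real.exp (-u) - 1 + u| := abs_add_le _ _
      _ ≤ 3 / 2 * u ^ 2 := by linarith
  have homega : y = -(u * (1 - t)) + Real.exp (-u) * (t * Real.sin u + Real.cos u) := by
    rw [hy, hu]; unfold omega gt; ring
  have hE : |y - 1 + 2 * (1 - t) * u| ≤ (|t| + 2) * r ^ 2 := by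
    have e1 : y - 1 + 2 * (1 - t) * u
        = t * (Real.exp (-u) * Real.sin u - u) + (Real.exp (-u) * Real.cos u - 1 + u) := by
      rw [homega]; ring
    rw [e1]
    calc |t * (Real.exp (-u) * Real.sin u - u) + (Real.exp (-u) * Real.cos u - 1 + u)|
        ≤ |t * (Real.exp (-u) * Real.sin u - u)| + |Real.exp (-u) * Real.cos u - 1 + u| :=
          abs_add_le _ _
      _ ≤ |t| * (5 / 4 * u ^ 2) + 3 / 2 * u ^ 2 := by
          rw [abs_mul]
          exact add_le_add (mul_le_mul_of_nonneg_left hA (abs_nonneg t)) hBc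
      _ ≤ (|t| + 2) * r ^ 2 := by
          nlinarith only [hu2, abs_nonneg t, sq_nonneg r, mul_nonneg (abs_nonneg t) (sq_nonneg r)]
  have hy1 : |y - 1| ≤ K * r := by
    have hE' := abs_le.mp hE
    have hEu : 0 ≤ 2 * (1 - t) * u := mul_nonneg (by linarith : (0:ℝ) ≤ 2 * (1 - t)) hu0.le
    have hEur : 0 ≤ 2 * (1 - t) * r := mul_nonneg (by linarith : (0:ℝ) ≤ 2 * (1 - t)) hr.le
    have hEu2 : 2 * (1 - t) * u ≤ 2 * (1 - t) * r :=
      mul_le_mul_of_nonneg_left hur (by linarith : (0:ℝ) ≤ 2 * (1 - t))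
    have htr : (|t| + 2) * r ^ 2 ≤ (|t| + 2) * r :=
      mul_le_mul_of_nonneg_left hr2 (by positivity)
    rw [abs_le]; constructor
    · rw [hK]; linarith only [hE'.1, hEu2, htr]
    · rw [hK]; linarith only [hE'.2, hEu, hEur, htr]
  have hy2 : |y - 1| ≤ 1 / 2 := by
    refine hy1.trans ?_
    calc K * r ≤ K * (1 / (2 * K)) := mul_le_mul_of_nonneg_left hrK hK0.le
      _ = 1 / 2 := by field_simp
  obtain ⟨hw0, hwe⟩ := hW (Real.exp y) (Real.exp_pos y)
  set w : ℝ := W (Real.exp y) with hwdef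
  have hlog : Real.log w + w = y := by
    have h1 := congrArg Real.log hwe
    rwa [Real.log_mul hw0.ne' (Real.exp_ne_zero w), Real.log_exp, Real.log_exp] at h1
  have hwc : |w - 1| ≤ |y - 1| := by
    rcases le_or_gt 1 w with h | h
    · have hl : 0 ≤ Real.log w := Real.log_nonneg h
      rw [abs_of_nonneg (by linarith : (0:ℝ) ≤ w - 1)]
      calc w - 1 ≤ w - 1 + Real.log w := by linarith
        _ = y - 1 := by linarith
        _ ≤ |y - 1| := le_abs_self _
    · have hl : Real.log w ≤ 0 := Real.log_nonpos hw0.le h.le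
      rw [abs_of_neg (by linarith : w - 1 < 0)]
      calc -(w - 1) ≤ -(w - 1) - Real.log w := by linarith
        _ = -(y - 1) := by linarith
        _ ≤ |y - 1| := neg_le_abs _
  have hwhalf : 1 / 2 ≤ w := by
    have h3 := (abs_le.mp (hwc.trans hy2)).1; linarith
  have hlup : Real.log w ≤ w - 1 := Real.log_le_sub_one_of_pos hw0
  have hllo : 1 - w⁻¹ ≤ Real.log w := Real.one_sub_inv_le_log_of_pos hw0
  have hinv : w * w⁻¹ = 1 := mul_inv_cancel₀ hw0.ne'
  have hkey1 : 0 ≤ w - 1 - Real.log w := by linarith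
  have hkey2 : w - 1 - Real.log w ≤ 2 * (w - 1) ^ 2 := by
    have h4 : (2 * (w - 1) ^ 2 - (w - 2 + w⁻¹)) * w = (w - 1) ^ 2 * (2 * w - 1) := by
      field_simp
      ring
    have h3 : w - 2 + w⁻¹ ≤ 2 * (w - 1) ^ 2 := by
      nlinarith only [h4, hw0,
        mul_nonneg (sq_nonneg (w - 1)) (by linarith : (0:ℝ) ≤ 2 * w - 1)]
    linarith only [hllo, h3]
  have hwsq : (w - 1) ^ 2 ≤ K ^ 2 * r ^ 2 := by
    have h1 : |w - 1| ≤ K * r := hwc.trans hy1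
    calc (w - 1) ^ 2 = |w - 1| ^ 2 := (sq_abs _).symm
      _ ≤ (K * r) ^ 2 := pow_le_pow_left₀ (abs_nonneg _) h1 2
      _ = K ^ 2 * r ^ 2 := by ring
  have hlin : |(w - y) - a * r| ≤ C3 * r ^ 2 := by
    have e1 : (w - y) - a * r
        = (w - 1 - Real.log w) / 2 - (y - 1 + 2 * (1 - t) * u) / 2 := by
      have hy' : y = Real.log w + w := hlog.symm
      rw [hy', ha, hu]; ring
    rw [e1]
    have b1 : |(w - 1 - Real.log w) / 2| ≤ K ^ 2 * r ^ 2 := by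
      rw [abs_of_nonneg (by linarith : (0:ℝ) ≤ (w - 1 - Real.log w) / 2)]
      calc (w - 1 - Real.log w) / 2 ≤ (w - 1) ^ 2 := by linarith only [hkey2]
        _ ≤ K ^ 2 * r ^ 2 := hwsq
    have b2 : |(y - 1 + 2 * (1 - t) * u) / 2| ≤ (|t| + 2) / 2 * r ^ 2 := by
      rw [abs_div, abs_two]
      linarith [hE]
    calc |(w - 1 - Real.log w) / 2 - (y - 1 + 2 * (1 - t) * u) / 2|
        ≤ |(w - 1 - Real.log w) / 2| + |(y - 1 + 2 * (1 - t) * u) / 2| := abs_sub _ _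
      _ ≤ K ^ 2 * r ^ 2 + (|t| + 2) / 2 * r ^ 2 := add_le_add b1 b2
      _ = C3 * r ^ 2 := by rw [hC3]; ring
  set q : ℝ := (w - y) / r with hqdef
  have hqfold : (w - y) ^ 2 / r ^ 2 = q ^ 2 := by
    rw [hqdef, div_pow]
  have hqa : |q - a| ≤ C3 * r := by
    have e : q - a = ((w - y) - a * r) / r := by
      rw [hqdef]; field_simp
    rw [e, abs_div, abs_of_pos hr, div_le_iff₀ hr]
    calc |(w - y) - a * r| ≤ C3 * r ^ 2 := hlin
      _ = C3 * r * r := by ring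
  have h1 : |q + a| ≤ 2 * a + C3 := by
    have e : q + a = (q - a) + 2 * a := by ring
    have h2 : |q + a| ≤ |q - a| + |2 * a| := by rw [e]; exact abs_add_le _ _
    have h2a : |2 * a| = 2 * a := abs_of_pos (by linarith)
    have hC3r : C3 * r ≤ C3 := by simpa using mul_le_mul_of_nonneg_left hr1 hC30.le
    linarith [hqa]
  have ha2 : a ^ 2 = (1 - t) ^ 2 / 2 := by rw [ha, div_pow, hs2sq]
  rw [hqfold, ← ha2]
  have e2 : q ^ 2 - a ^ 2 = (q - a) * (q + a) := by ring
  rw [e2, abs_mul]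
  calc |q - a| * |q + a| ≤ (C3 * r) * (2 * a + C3) :=
        mul_le_mul hqa h1 (abs_nonneg _) (by positivity)
    _ = C3 * (2 * a + C3) * r := by ring

/-- For `t < 1`, with `λ_t(r) = r^{-2}[W(e^{ω(r)}) − ω(r)]²`, `λ_t` extends continuously
to `r = 0` with value `(1−t)²/2`, and `λ_t(r) = (1−t)²/2 + O(r)` as `r → 0⁺`.
`W` is the principal Lambert function, characterized on `(0,∞)` by
`W(x) > 0` and `W(x)e^{W(x)} = x`. -/
theorem lambdat_asymptotics_zero
    (W : ℝ → ℝ) (hW : ∀ x : ℝ, 0 < x → 0 < W x ∧ W x * Real.exp (W x) = x)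
    (t : ℝ) (ht : t < 1) :
    Tendsto (fun r : ℝ => (W (Real.exp (omega t r)) - omega t r) ^ 2 / r ^ 2)
      (nhdsWithin 0 (Set.Ioi 0)) (nhds ((1 - t) ^ 2 / 2)) ∧
    ∃ C > (0:ℝ), ∃ δ > (0:ℝ), ∀ r : ℝ, 0 < r → r < δ →
      |(W (Real.exp (omega t r)) - omega t r) ^ 2 / r ^ 2 - (1 - t) ^ 2 / 2| ≤ C * r := by
  obtain ⟨C, hC, δ, hδ, hbound⟩ := lambdat_key W hW t ht
  refine ⟨?_, C, hC, δ, hδ, hbound⟩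
  have h0 : Tendsto
      (fun r : ℝ => (W (Real.exp (omega t r)) - omega t r) ^ 2 / r ^ 2 - (1 - t) ^ 2 / 2)
      (nhdsWithin 0 (Set.Ioi 0)) (nhds 0) := by
    apply squeeze_zero_norm' (a := fun r : ℝ => C * r)
    · filter_upwards [Ioo_mem_nhdsGT hδ] with r hr
      simpa [Real.norm_eq_abs] using hbound r hr.1 hr.2
    · have h1 : Tendsto (fun r : ℝ => C * r) (nhds (0:ℝ)) (nhds (C * 0)) :=
        tendsto_id.const_mul C
      simpa using h1.mono_left nhdsWithin_le_nhds
  have h2 := h0.add (tendsto_const_nhds (x := (1 - t) ^ 2 / 2)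
    (f := nhdsWithin (0:ℝ) (Set.Ioi 0)))
  simpa using h2
end
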